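/- arXiv:1512.06429 — 3 statements merged into one kernel-verified Lean document; each statement's English description precedes it below -/
import Mathlib

section
/- Let U be an integer-valued random variable with finite mean absolute value E|U|. Then H(U) ≤ (E|U| + 1)·h_b(1/(E|U|+1)) + log 2, where h_b is the binary entropy function in nats. -/
set_option maxHeartbeats 1000000

open MeasureTheory Real

/-- Shannon entropy (in nats) of an integer-valued random variable. -/
noncomputable def intEntropy {Ω : Type*} [MeasurableSpace Ω] (μ : Measure Ω) (U : Ω → ℤ) : ℝ :=
  ∑' n : ℤ, Real.negMulLog ((μ.map U) {n}).toReal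

theorem entropy_le_of_abs_mean {Ω : Type*} [MeasurableSpace Ω] (μ : Measure Ω)
    [IsProbabilityMeasure μ] (U : Ω → ℤ) (hU : Measurable U)
    (hint : Integrable (fun ω => |(U ω : ℝ)|) μ) :
    intEntropy μ U ≤
      ((∫ ω, |(U ω : ℝ)| ∂μ) + 1) * Real.binEntropy (1 / ((∫ ω, |(U ω : ℝ)| ∂μ) + 1))
        + Real.log 2 := by
  classical
  have hUae : AEMeasurable U μ := hU.aemeasurable
  set a := ∫ ω, |(U ω : ℝ)| ∂μ with ha_def
  set ν := μ.map U with hν_def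
  haveI hν : IsProbabilityMeasure ν := Measure.isProbabilityMeasure_map hUae
  set p : ℤ → ℝ := fun n => (ν {n}).toReal with hp_def
  have hp0 : ∀ n, 0 ≤ p n := fun n => ENNReal.toReal_nonneg
  have hp1 : ∀ n, p n ≤ 1 := fun n => by
    have h := prob_le_one (μ := ν) (s := {n})
    have := ENNReal.toReal_mono ENNReal.one_ne_top h
    simpa using this
  have htsum_en : ∑' n : ℤ, ν {n} = 1 := by
    simpa using Measure.tsum_indicator_apply_singleton ν Set.univ MeasurableSet.univ
  have hsum_p : Summable p := by
    apply ENNReal.summable_toReal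
    rw [htsum_en]; exact ENNReal.one_ne_top
  have htsum_p : ∑' n, p n = 1 := by
    simp only [hp_def]
    rw [← ENNReal.tsum_toReal_eq (fun n => measure_ne_top ν _), htsum_en, ENNReal.toReal_one]
  have hgmeas : Measurable (fun n : ℤ => |(n : ℝ)|) := measurable_of_countable _
  have hint' : Integrable (fun n : ℤ => |(n : ℝ)|) ν := by
    rw [hν_def, integrable_map_measure hgmeas.aestronglyMeasurable hUae]
    exact hint
  have ha_eq : a = ∑' n : ℤ, p n * |(n : ℝ)| := by
    have h1 : a = ∫ n : ℤ, |(n : ℝ)| ∂ν := by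
      rw [ha_def, hν_def, integral_map hUae hgmeas.aestronglyMeasurable]
    rw [h1, integral_countable' hint']
    simp [hp_def, smul_eq_mul, Measure.real]
  have hsum_a : Summable (fun n : ℤ => p n * |(n : ℝ)|) := by
    have hfin : ∑' n : ℤ, (‖|(n : ℝ)|‖₊ : ENNReal) * ν {n} ≠ ⊤ := by
      rw [← lintegral_countable']
      exact hint'.2.ne
    refine (ENNReal.summable_toReal hfin).congr fun n => ?_
    simp [hp_def, ENNReal.toReal_mul, Real.norm_eq_abs, abs_abs, mul_comm]
  have ha0 : 0 ≤ a := by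
    rw [ha_def]
    exact integral_nonneg fun ω => abs_nonneg _
  rcases eq_or_lt_of_le ha0 with h0 | hapos
  · -- degenerate case a = 0: U = 0 a.s.
    have hzero : ∀ n : ℤ, n ≠ 0 → p n = 0 := by
      intro n hn
      have hterm : p n * |(n : ℝ)| ≤ 0 := by
        have h := Summable.le_tsum hsum_a n (fun m _ => mul_nonneg (hp0 m) (abs_nonneg _))
        rw [← ha_eq, ← h0] at h
        exact h
      have habs : 0 < |(n : ℝ)| := abs_pos.mpr (by exact_mod_cast hn)
      nlinarith [hp0 n]
    have hp0eq : p 0 = 1 := by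
      have h := tsum_eq_single (L := SummationFilter.unconditional ℤ) (f := p) 0 (fun n hn => hzero n hn)
      rw [htsum_p] at h
      exact h.symm
    have hent_eq : intEntropy μ U = ∑' n : ℤ, negMulLog (p n) := rfl
    have h1 : ∑' n : ℤ, negMulLog (p n) = negMulLog (p 0) :=
      tsum_eq_single 0 (fun n hn => by rw [hzero n hn, negMulLog_zero])
    rw [hent_eq, h1, hp0eq, negMulLog_one, ← h0]
    norm_num
    exact Real.log_nonneg one_le_two
  · -- main case a > 0
    set θ : ℝ := a / (a + 1) with hθ_def
    have ha1 : (0 : ℝ) < a + 1 := by linarith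
    have hθ0 : 0 < θ := div_pos hapos ha1
    have hθ1 : θ < 1 := by rw [hθ_def, div_lt_one ha1]; linarith
    set c : ℝ := 2 * a + 1 with hc_def
    have hc0 : (0 : ℝ) < c := by rw [hc_def]; linarith
    set q : ℤ → ℝ := fun n => θ ^ n.natAbs / c with hq_def
    have hq0 : ∀ n, 0 < q n := fun n => div_pos (pow_pos hθ0 _) hc0
    have hgeo : Summable (fun k : ℕ => θ ^ k) := summable_geometric_of_lt_one hθ0.le hθ1
    have hposf : Summable (fun k : ℕ => θ ^ ((k : ℤ)).natAbs) := by simpa using hgeo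
    have hnegf : Summable (fun k : ℕ => θ ^ ((-((k : ℤ) + 1)).natAbs)) := by
      have he : (fun k : ℕ => θ ^ ((-((k : ℤ) + 1)).natAbs)) = fun k : ℕ => θ ^ (k + 1) := by
        funext k
        have h : ((-((k : ℤ) + 1)).natAbs) = k + 1 := by omega
        rw [h]
      rw [he]
      simpa [pow_succ] using hgeo.mul_right θ
    have hsq : Summable (fun n : ℤ => θ ^ n.natAbs) :=
      Summable.of_nat_of_neg_add_one (f := fun n : ℤ => θ ^ n.natAbs) hposf hnegf
    have htq : ∑' n : ℤ, θ ^ n.natAbs = c := by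
      rw [tsum_of_nat_of_neg_add_one (f := fun n : ℤ => θ ^ n.natAbs) hposf hnegf]
      have h1 : ∑' k : ℕ, θ ^ ((k : ℤ)).natAbs = (1 - θ)⁻¹ := by
        simpa using tsum_geometric_of_lt_one hθ0.le hθ1
      have h2 : ∑' k : ℕ, θ ^ ((-((k : ℤ) + 1)).natAbs) = θ * (1 - θ)⁻¹ := by
        have he : (fun k : ℕ => θ ^ ((-((k : ℤ) + 1)).natAbs)) = fun k : ℕ => θ * θ ^ k := by
          funext k
          have : ((-((k : ℤ) + 1)).natAbs) = k + 1 := by omega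
          rw [this, pow_succ]; ring
        rw [he, tsum_mul_left, tsum_geometric_of_lt_one hθ0.le hθ1]
      rw [h1, h2]
      have hne : (1 : ℝ) - θ ≠ 0 := by linarith
      rw [hθ_def, hc_def]
      field_simp
      ring
    have hsumq : Summable q := by
      simp only [hq_def, div_eq_mul_inv]
      exact hsq.mul_right _
    have htsumq : ∑' n, q n = 1 := by
      simp only [hq_def, div_eq_mul_inv]
      rw [tsum_mul_right, htq]
      field_simp
    have hlogq : ∀ n : ℤ, -Real.log (q n) = Real.log c + (n.natAbs : ℝ) * (-Real.log θ) := by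
      intro n
      simp only [hq_def]
      rw [Real.log_div (pow_ne_zero _ hθ0.ne') hc0.ne', Real.log_pow]
      ring
    have hcast : ∀ n : ℤ, ((n.natAbs : ℝ)) = |(n : ℝ)| := by
      intro n
      rw [Nat.cast_natAbs, Int.cast_abs]
    have hsum1 : Summable (fun n : ℤ => p n * Real.log c) := hsum_p.mul_right _
    have hsum2 : Summable (fun n : ℤ => p n * |(n : ℝ)| * (-Real.log θ)) := hsum_a.mul_right _
    have hsum_plogq : Summable (fun n : ℤ => p n * (-Real.log (q n))) := by
      refine (hsum1.add hsum2).congr fun n => ?_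
      rw [hlogq n, hcast n]
      ring
    have htsum_plogq : ∑' n, p n * (-Real.log (q n)) = Real.log c + a * (-Real.log θ) := by
      calc ∑' n, p n * (-Real.log (q n))
          = ∑' n : ℤ, (p n * Real.log c + p n * |(n : ℝ)| * (-Real.log θ)) := by
            refine tsum_congr fun n => ?_
            rw [hlogq n, hcast n]; ring
        _ = (∑' n : ℤ, p n * Real.log c) + ∑' n : ℤ, p n * |(n : ℝ)| * (-Real.log θ) :=
            Summable.tsum_add hsum1 hsum2
        _ = Real.log c + a * (-Real.log θ) := by
            rw [tsum_mul_right, tsum_mul_right, htsum_p, ← ha_eq]; ring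
    have key : ∀ n : ℤ, negMulLog (p n) ≤ p n * (-Real.log (q n)) + (q n - p n) := by
      intro n
      rcases eq_or_lt_of_le (hp0 n) with hpn | hpn
      · rw [← hpn]
        simp [negMulLog]
        exact (hq0 n).le
      · have hlog : Real.log (q n / p n) ≤ q n / p n - 1 :=
          Real.log_le_sub_one_of_pos (div_pos (hq0 n) hpn)
        rw [Real.log_div (hq0 n).ne' hpn.ne'] at hlog
        have hmul := mul_le_mul_of_nonneg_left hlog (hp0 n)
        have hpq : p n * (q n / p n - 1) = q n - p n := by field_simp
        rw [hpq, mul_sub] at hmul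
        simp only [negMulLog, mul_neg, neg_mul]
        linarith
    have hsumRHS : Summable (fun n : ℤ => p n * (-Real.log (q n)) + (q n - p n)) :=
      hsum_plogq.add (hsumq.sub hsum_p)
    have hsumLHS : Summable (fun n : ℤ => negMulLog (p n)) :=
      Summable.of_nonneg_of_le (fun n => negMulLog_nonneg (hp0 n) (hp1 n)) key hsumRHS
    have hmain : intEntropy μ U ≤ Real.log c + a * (-Real.log θ) := by
      have h1 : intEntropy μ U = ∑' n : ℤ, negMulLog (p n) := rfl
      rw [h1]
      calc ∑' n : ℤ, negMulLog (p n)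
          ≤ ∑' n : ℤ, (p n * (-Real.log (q n)) + (q n - p n)) :=
            Summable.tsum_le_tsum key hsumLHS hsumRHS
        _ = (∑' n, p n * (-Real.log (q n))) + ((∑' n, q n) - ∑' n, p n) := by
            rw [Summable.tsum_add hsum_plogq (hsumq.sub hsum_p), Summable.tsum_sub hsumq hsum_p]
        _ = Real.log c + a * (-Real.log θ) := by
            rw [htsum_plogq, htsumq, htsum_p]; ring
    have hθlog : -Real.log θ = Real.log (a + 1) - Real.log a := by
      rw [hθ_def, Real.log_div hapos.ne' ha1.ne']; ring
    have hbe : (a + 1) * Real.binEntropy (1 / (a + 1))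
        = Real.log (a + 1) + a * (Real.log (a + 1) - Real.log a) := by
      have e1 : ((1 / (a + 1) : ℝ))⁻¹ = a + 1 := by field_simp
      have e2 : (1 : ℝ) - 1 / (a + 1) = a / (a + 1) := by field_simp; ring
      have e3 : ((a / (a + 1) : ℝ))⁻¹ = (a + 1) / a := by rw [inv_div]
      rw [Real.binEntropy, e1, e2, e3, Real.log_div ha1.ne' hapos.ne']
      field_simp
    have hlogc : Real.log c ≤ Real.log 2 + Real.log (a + 1) := by
      rw [← Real.log_mul two_ne_zero ha1.ne']
      exact Real.log_le_log hc0 (by rw [hc_def]; linarith)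
    calc intEntropy μ U ≤ Real.log c + a * (-Real.log θ) := hmain
      _ ≤ (Real.log 2 + Real.log (a + 1)) + a * (Real.log (a + 1) - Real.log a) := by
          rw [hθlog]; linarith
      _ = (a + 1) * Real.binEntropy (1 / (a + 1)) + Real.log 2 := by rw [hbe]; ring
end

section
/- Let X be a real random variable with E[X²] = 1, E[X] = 0, and let Y = √γ·X + Z with Z ~ N(0,1) independent of X, γ > 0. Let φ_X be the characteristic function of X and suppose E|f_M(Y) − f_L(Y)|² ≤ ε where f_M(y) = E[X|Y=y] and f_L(y) = √γ·y/(1+γ). Then for all u ∈ ℝ, e^{−u²/(2γ)}·|φ_X'(u) + u·φ_X(u)| ≤ (1+γ)·√ε. -/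
open MeasureTheory ProbabilityTheory Real Complex
open scoped ENNReal NNReal

/-- Characteristic function of a measure on ℝ. -/
noncomputable def charFun (P : Measure ℝ) (t : ℝ) : ℂ :=
  ∫ x, Complex.exp (Complex.I * t * x) ∂P

section Aux

lemma expIux_hasDerivAt (x v : ℝ) :
    HasDerivAt (fun v : ℝ => Complex.exp (Complex.I * v * x))
      (Complex.I * x * Complex.exp (Complex.I * v * x)) v := by
  have h0 : HasDerivAt (fun v : ℝ => ((v : ℂ))) 1 v := by
    simpa using (hasDerivAt_id v).ofReal_comp
  have h1 : HasDerivAt (fun v : ℝ => (Complex.I * x) * (v : ℂ)) (Complex.I * x) v := by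
    simpa using h0.const_mul (Complex.I * x)
  have h2 := h1.cexp
  have hfun : (fun v : ℝ => Complex.exp (Complex.I * v * x))
      = fun v : ℝ => Complex.exp ((Complex.I * x) * v) := by
    funext w
    congr 1
    ring
  rw [hfun]
  convert h2 using 1
  ring_nf

lemma norm_expI (v r : ℝ) : ‖Complex.exp (Complex.I * v * r)‖ = 1 := by
  rw [Complex.norm_exp]
  norm_num [Complex.mul_re, Complex.mul_im]

lemma measurable_expI (v : ℝ) : Measurable (fun x : ℝ => Complex.exp (Complex.I * v * x)) :=
  (Complex.measurable_ofReal.const_mul (Complex.I * v)).cexp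



lemma hasDerivAt_charFun {P : Measure ℝ} [IsProbabilityMeasure P]
    (hP : Integrable (fun x => x) P) (u : ℝ) :
    HasDerivAt (_root_.charFun P) (∫ x, Complex.I * x * Complex.exp (Complex.I * u * x) ∂P) u := by
  have hmeas : ∀ v : ℝ, AEStronglyMeasurable (fun x : ℝ => Complex.exp (Complex.I * v * x)) P :=
    fun v => (measurable_expI v).aestronglyMeasurable
  have hF'meas : AEStronglyMeasurable
      (fun x : ℝ => Complex.I * x * Complex.exp (Complex.I * u * x)) P :=
    ((Complex.measurable_ofReal.const_mul Complex.I).mul (measurable_expI u)).aestronglyMeasurable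
  have h := hasDerivAt_integral_of_dominated_loc_of_lip (𝕜 := ℝ)
    (bound := fun x : ℝ => |x|)
    (F := fun (v : ℝ) (x : ℝ) => Complex.exp (Complex.I * v * x))
    (F' := fun x : ℝ => Complex.I * x * Complex.exp (Complex.I * u * x))
    (x₀ := u) (Metric.ball_mem_nhds u one_pos)
    (Filter.Eventually.of_forall fun v => hmeas v)
    ((integrable_const (1 : ℝ)).mono' (hmeas u)
      (Filter.Eventually.of_forall fun x => le_of_eq (norm_expI u x)))
    hF'meas
    (Filter.Eventually.of_forall fun x => ?_)
    hP.abs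
    (Filter.Eventually.of_forall fun x => expIux_hasDerivAt x u)
  · exact h.2
  · refine (convex_ball u 1).lipschitzOnWith_of_nnnorm_hasDerivWithin_le
      (f' := fun v : ℝ => Complex.I * x * Complex.exp (Complex.I * v * x))
      (fun v _ => (expIux_hasDerivAt x v).hasDerivWithinAt) (fun v _ => ?_)
    rw [← NNReal.coe_le_coe]
    simp only [coe_nnnorm, Real.coe_nnabs]
    rw [norm_mul, norm_mul, norm_expI]
    simp [Complex.norm_real]



lemma integral_gaussianReal_smul {E : Type*} [NormedAddCommGroup E] [NormedSpace ℝ E]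
    (g : ℝ → E) :
    ∫ x, g x ∂(gaussianReal 0 1) = ∫ x, gaussianPDFReal 0 1 x • g x := by
  rw [gaussianReal_of_var_ne_zero 0 one_ne_zero, gaussianPDF_def]
  have h : (fun x => ENNReal.ofReal (gaussianPDFReal 0 1 x))
      = fun x => (((gaussianPDFReal 0 1 x).toNNReal : ℝ≥0) : ℝ≥0∞) := rfl
  rw [h, integral_withDensity_eq_integral_smul ((measurable_gaussianPDFReal 0 1).real_toNNReal)]
  congr 1; funext x
  rw [NNReal.smul_def, Real.coe_toNNReal _ (gaussianPDFReal_nonneg 0 1 x)]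

lemma charFun_gaussianReal (t : ℝ) :
    _root_.charFun (gaussianReal 0 1) t = ((Real.exp (-t ^ 2 / 2) : ℝ) : ℂ) := by
  rw [_root_.charFun, integral_gaussianReal_smul]
  have hpdf : ∀ x : ℝ, gaussianPDFReal 0 1 x • Complex.exp (Complex.I * t * x)
      = (Real.sqrt (2 * π))⁻¹ •
        Complex.exp ((-(1/2) : ℂ) * x ^ 2 + (Complex.I * t) * x + 0) := by
    intro x
    rw [gaussianPDFReal]
    simp only [NNReal.coe_one, mul_one, sub_zero]
    rw [← smul_smul]
    congr 1
    rw [Complex.real_smul, Complex.ofReal_exp, ← Complex.exp_add]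
    congr 1
    push_cast
    ring
  simp_rw [hpdf]
  rw [integral_smul, integral_cexp_quadratic (by norm_num : (-(1/2) : ℂ).re < 0)]
  have h2π : (0:ℝ) ≤ 2 * π := by positivity
  have hsq : ((π : ℂ) / -(-(1/2) : ℂ)) ^ (1/2 : ℂ) = ((Real.sqrt (2 * π) : ℝ) : ℂ) := by
    have h : ((π : ℂ) / -(-(1/2) : ℂ)) = ((2 * π : ℝ) : ℂ) := by push_cast; ring
    rw [h, Real.sqrt_eq_rpow, show ((1:ℂ)/2) = (((1:ℝ)/2 : ℝ) : ℂ) by norm_num,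
      ← Complex.ofReal_cpow h2π]
  rw [hsq]
  have hne : ((Real.sqrt (2 * π) : ℝ) : ℂ) ≠ 0 := by
    rw [Complex.ofReal_ne_zero]
    positivity
  rw [Complex.real_smul, Complex.ofReal_inv, ← mul_assoc, inv_mul_cancel₀ hne, one_mul]
  rw [Complex.ofReal_exp]
  have hI : (Complex.I * (t:ℂ)) ^ 2 = -((t:ℂ)) ^ 2 := by
    rw [mul_pow, Complex.I_sq]; ring
  congr 1
  rw [hI]
  push_cast
  ring

lemma integrable_sq_gaussianReal :
    Integrable (fun x : ℝ => x ^ 2) (gaussianReal 0 1) := by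
  rw [gaussianReal_of_var_ne_zero 0 one_ne_zero]
  rw [integrable_withDensity_iff (measurable_gaussianPDF 0 1)
    (Filter.Eventually.of_forall fun x => ENNReal.ofReal_lt_top)]
  have hpt : ∀ x : ℝ, ‖x ^ 2 * (gaussianPDF 0 1 x).toReal‖
      ≤ (Real.sqrt (2 * π))⁻¹ * (4 * Real.exp (-(1/4) * x ^ 2)) := by
    intro x
    rw [gaussianPDF, ENNReal.toReal_ofReal (gaussianPDFReal_nonneg 0 1 x), gaussianPDFReal]
    simp only [NNReal.coe_one, mul_one, sub_zero]
    have h1 : (1/4 : ℝ) * x ^ 2 + 1 ≤ Real.exp ((1/4) * x ^ 2) := Real.add_one_le_exp _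
    have h2 : Real.exp (-(1/4) * x ^ 2) * Real.exp ((1/4) * x ^ 2) = 1 := by
      rw [← Real.exp_add]; norm_num
    have h3 : (0:ℝ) < Real.exp (-(1/4) * x ^ 2) := Real.exp_pos _
    have h4 : Real.exp (-x ^ 2 / 2) = Real.exp (-(1/4) * x ^ 2) * Real.exp (-(1/4) * x ^ 2) := by
      rw [← Real.exp_add]; ring_nf
    have h5 : (0:ℝ) < (Real.sqrt (2 * π))⁻¹ := by positivity
    rw [h4, Real.norm_eq_abs, _root_.abs_of_nonneg (by positivity)]
    have h7 : x ^ 2 * Real.exp (-(1/4) * x ^ 2) ≤ 4 := by nlinarith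
    nlinarith [mul_le_mul_of_nonneg_right h7 (mul_nonneg h3.le h5.le), h3, h5]
  refine Integrable.mono' (g := fun x => (Real.sqrt (2 * π))⁻¹ * (4 * Real.exp (-(1/4) * x ^ 2)))
    ?_ ?_ (Filter.Eventually.of_forall hpt)
  · have h := (integrable_exp_neg_mul_sq (by norm_num : (0:ℝ) < 1/4)).const_mul
      ((Real.sqrt (2 * π))⁻¹ * 4)
    refine h.congr (Filter.Eventually.of_forall fun x => ?_)
    ring_nf
  · exact ((measurable_id.pow_const 2).mul
      ((measurable_gaussianPDF 0 1).ennreal_toReal)).aestronglyMeasurable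

lemma memℒp_two_id_gaussianReal : MemLp (fun x : ℝ => x) 2 (gaussianReal 0 1) :=
  (memLp_two_iff_integrable_sq measurable_id.aestronglyMeasurable).2 integrable_sq_gaussianReal


lemma l1_le_sqrt_l2 {Ω : Type*} [MeasurableSpace Ω] (μ : Measure Ω) [IsProbabilityMeasure μ]
    {h : Ω → ℝ} (hh : MemLp h 2 μ) :
    ∫ ω, |h ω| ∂μ ≤ Real.sqrt (∫ ω, h ω ^ 2 ∂μ) := by
  have hh1 : Integrable h μ := hh.integrable one_le_two
  have hsq : Integrable (fun ω => h ω ^ 2) μ := hh.integrable_sq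
  set a := ∫ ω, |h ω| ∂μ with ha
  have ha0 : 0 ≤ a := integral_nonneg fun ω => abs_nonneg _
  have key : 0 ≤ ∫ ω, (|h ω| - a) ^ 2 ∂μ := integral_nonneg fun ω => sq_nonneg _
  have i2 : Integrable (fun ω => 2 * a * |h ω|) μ := (hh1.abs).const_mul (2 * a)
  have i1 : Integrable (fun ω => h ω ^ 2 - 2 * a * |h ω|) μ := hsq.sub i2
  have expand : ∫ ω, (|h ω| - a) ^ 2 ∂μ
      = (∫ ω, h ω ^ 2 ∂μ) - 2 * a * a + a ^ 2 := by
    have e : (fun ω => (|h ω| - a) ^ 2)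
        = fun ω => (h ω ^ 2 - 2 * a * |h ω|) + a ^ 2 := by
      funext ω
      rw [sub_sq, _root_.sq_abs]
      ring
    rw [e, integral_add i1 (integrable_const _), integral_sub hsq i2, integral_const_mul, integral_const]
    simp [measure_univ, ← ha]
  have h2 : a ^ 2 ≤ ∫ ω, h ω ^ 2 ∂μ := by nlinarith [key, expand]
  have hnn : 0 ≤ ∫ ω, h ω ^ 2 ∂μ := le_trans (sq_nonneg a) h2
  exact (Real.le_sqrt ha0 hnn).2 h2

lemma memℒp_two_condexp {Ω : Type*} [m0 : MeasurableSpace Ω] (μ : Measure Ω)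
    [IsProbabilityMeasure μ] {m : MeasurableSpace Ω} (hm : m ≤ m0) {X : Ω → ℝ}
    (hX2 : MemLp X 2 μ) : MemLp (μ[X|m]) 2 μ := by
  set f2 := hX2.toLp X with hf2
  have hcd : (((condExpL2 ℝ ℝ hm f2 : Lp ℝ 2 μ)) : Ω → ℝ) =ᵐ[μ] μ[X|m] := by
    refine ae_eq_condExp_of_forall_setIntegral_eq hm (hX2.integrable one_le_two)
      (fun s _ hμs => integrableOn_condExpL2_of_measure_ne_top hm hμs.ne f2)
      (fun s hs hμs => ?_) (aestronglyMeasurable_condExpL2 hm f2)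
    rw [integral_condExpL2_eq hm f2 hs hμs.ne]
    exact integral_congr_ae (ae_restrict_of_ae hX2.coeFn_toLp)
  exact (Lp.memLp ((condExpL2 ℝ ℝ hm f2 : Lp ℝ 2 μ))).ae_eq hcd

lemma indep_mul_integral {Ω : Type*} [MeasurableSpace Ω] (μ : Measure Ω)
    [IsProbabilityMeasure μ] {X Z : Ω → ℝ} (hX : Measurable X) (hZ : Measurable Z)
    (hindep : IndepFun X Z μ) {F G : ℝ → ℂ} (hF : Measurable F) (hG : Measurable G) :
    ∫ ω, F (X ω) * G (Z ω) ∂μ = (∫ ω, F (X ω) ∂μ) * ∫ ω, G (Z ω) ∂μ := by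
  haveI : IsProbabilityMeasure (μ.map X) := Measure.isProbabilityMeasure_map hX.aemeasurable
  haveI : IsProbabilityMeasure (μ.map Z) := Measure.isProbabilityMeasure_map hZ.aemeasurable
  have hmap : μ.map (fun ω => (X ω, Z ω)) = (μ.map X).prod (μ.map Z) :=
    (indepFun_iff_map_prod_eq_prod_map_map hX.aemeasurable hZ.aemeasurable).1 hindep
  have h1 : ∫ ω, F (X ω) * G (Z ω) ∂μ
      = ∫ p : ℝ × ℝ, F p.1 * G p.2 ∂(μ.map (fun ω => (X ω, Z ω))) :=
    (integral_map (hX.prodMk hZ).aemeasurable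
      ((hF.comp measurable_fst).mul (hG.comp measurable_snd)).aestronglyMeasurable).symm
  rw [h1, hmap, integral_prod_mul, integral_map hX.aemeasurable hF.aestronglyMeasurable,
    integral_map hZ.aemeasurable hG.aestronglyMeasurable]

end Aux

theorem ode_bound_from_mmse_gap {Ω : Type*} [MeasurableSpace Ω] (μ : Measure Ω)
    [IsProbabilityMeasure μ] (X Z : Ω → ℝ) (hX : Measurable X) (hZ : Measurable Z)
    (hindep : IndepFun X Z μ) (hZlaw : μ.map Z = gaussianReal 0 1)
    (hmean : (∫ ω, X ω ∂μ) = 0) (hvar : (∫ ω, X ω ^ 2 ∂μ) = 1)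
    (γ ε : ℝ) (hγ : 0 < γ) (hε : 0 < ε)
    (Y : Ω → ℝ) (hY : Y = fun ω => Real.sqrt γ * X ω + Z ω)
    (g : ℝ → ℝ) (hg : Measurable g)
    (hcond : μ[X | MeasurableSpace.comap Y inferInstance] =ᵐ[μ] fun ω => g (Y ω))
    (hmmse : (∫ ω, |g (Y ω) - Real.sqrt γ * Y ω / (1 + γ)| ^ 2 ∂μ) ≤ ε) :
    ∀ u : ℝ, Real.exp (-u ^ 2 / (2 * γ))
        * ‖deriv (_root_.charFun (μ.map X)) u + (u : ℂ) * _root_.charFun (μ.map X) u‖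
      ≤ (1 + γ) * Real.sqrt ε := by
  intro u
  have hYm : Measurable Y := by rw [hY]; exact (measurable_const.mul hX).add hZ
  have hYω : ∀ ω, Y ω = Real.sqrt γ * X ω + Z ω := fun ω => by rw [hY]
  have hm : MeasurableSpace.comap Y inferInstance ≤ ‹MeasurableSpace Ω› :=
    measurable_iff_comap_le.mp hYm
  -- integrability
  have hIntX2 : Integrable (fun ω => X ω ^ 2) μ := by
    by_contra hc
    rw [integral_undef hc] at hvar
    norm_num at hvar
  have hX2 : MemLp X 2 μ := (memLp_two_iff_integrable_sq hX.aestronglyMeasurable).2 hIntX2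
  have hX1 : Integrable X μ := hX2.integrable one_le_two
  have hZ2 : MemLp Z 2 μ := by
    have hN : MemLp (fun x : ℝ => x) 2 (μ.map Z) := by
      rw [hZlaw]; exact memℒp_two_id_gaussianReal
    exact (memLp_map_measure_iff measurable_id.aestronglyMeasurable hZ.aemeasurable).1 hN
  have hZ1 : Integrable Z μ := hZ2.integrable one_le_two
  have hY2 : MemLp Y 2 μ := by rw [hY]; exact (hX2.const_mul _).add hZ2
  have hgY1 : Integrable (fun ω => g (Y ω)) μ := integrable_condExp.congr hcond
  have hgY2 : MemLp (fun ω => g (Y ω)) 2 μ := (memℒp_two_condexp μ hm hX2).ae_eq hcond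
  have hfLrw : (fun ω => Real.sqrt γ * Y ω / (1 + γ))
      = fun ω => (Real.sqrt γ / (1 + γ)) * Y ω := by funext ω; ring
  have hfL2 : MemLp (fun ω => Real.sqrt γ * Y ω / (1 + γ)) 2 μ := by
    rw [hfLrw]; exact hY2.const_mul _
  have hfL1 : Integrable (fun ω => Real.sqrt γ * Y ω / (1 + γ)) μ := hfL2.integrable one_le_two
  have hh2 : MemLp (fun ω => g (Y ω) - Real.sqrt γ * Y ω / (1 + γ)) 2 μ := hgY2.sub hfL2
  have hh1 : Integrable (fun ω => g (Y ω) - Real.sqrt γ * Y ω / (1 + γ)) μ :=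
    hh2.integrable one_le_two
  -- constants
  set t := u / Real.sqrt γ with ht_def
  have hsγ : (0:ℝ) < Real.sqrt γ := Real.sqrt_pos.2 hγ
  have hu : Real.sqrt γ * t = u := by
    rw [ht_def]
    exact mul_div_cancel₀ u hsγ.ne'
  have ht2 : -t ^ 2 / 2 = -u ^ 2 / (2 * γ) := by
    rw [ht_def, div_pow, Real.sq_sqrt hγ.le]
    ring
  set ψ : ℂ := ((Real.exp (-u ^ 2 / (2 * γ)) : ℝ) : ℂ) with hψ_def
  have hψeq : _root_.charFun (gaussianReal 0 1) t = ψ := by rw [_root_.charFun_gaussianReal, ht2]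
  have hψnorm : ‖ψ‖ = Real.exp (-u ^ 2 / (2 * γ)) := by
    rw [hψ_def, Complex.norm_real, Real.norm_eq_abs, abs_of_pos (Real.exp_pos _)]
  set P := μ.map X with hP_def
  haveI : IsProbabilityMeasure P := Measure.isProbabilityMeasure_map hX.aemeasurable
  have hPint : Integrable (fun x => x) P :=
    (integrable_map_measure measurable_id.aestronglyMeasurable hX.aemeasurable).2 hX1
  set A := _root_.charFun P u with hA_def
  set B := ∫ ω, (X ω : ℂ) * Complex.exp (Complex.I * u * X ω) ∂μ with hB_def
  have hAeq : A = ∫ ω, Complex.exp (Complex.I * u * X ω) ∂μ := by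
    rw [hA_def, hP_def, _root_.charFun,
      integral_map hX.aemeasurable (measurable_expI u).aestronglyMeasurable]
  have hDval : deriv (_root_.charFun P) u = Complex.I * B := by
    rw [(hasDerivAt_charFun hPint u).deriv,
      integral_map hX.aemeasurable (f := fun x : ℝ => Complex.I * x * Complex.exp (Complex.I * u * x))
        ((Complex.measurable_ofReal.const_mul Complex.I).mul
          (measurable_expI u)).aestronglyMeasurable,
      hB_def, ← integral_const_mul]
    congr 1
    funext ω
    ring
  have hexp : ∀ ω, Complex.exp (Complex.I * t * Y ω)
      = Complex.exp (Complex.I * u * X ω) * Complex.exp (Complex.I * t * Z ω) := by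
    intro ω
    rw [← Complex.exp_add]
    congr 1
    rw [hYω ω, ← hu]
    push_cast
    ring
  have hZint : ∀ (Gc : ℝ → ℂ), Measurable Gc →
      ∫ ω, Gc (Z ω) ∂μ = ∫ z, Gc z ∂(gaussianReal 0 1) := fun Gc hGc => by
    rw [← hZlaw, integral_map hZ.aemeasurable hGc.aestronglyMeasurable]
  have hGauss1 : ∫ z, Complex.exp (Complex.I * t * z) ∂(gaussianReal 0 1) = ψ := hψeq
  have hNint : Integrable (fun x : ℝ => x) (gaussianReal 0 1) :=
    memℒp_two_id_gaussianReal.integrable one_le_two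
  have hGauss2 : ∫ z, (z : ℂ) * Complex.exp (Complex.I * t * z) ∂(gaussianReal 0 1)
      = Complex.I * t * ψ := by
    have hd1 := hasDerivAt_charFun hNint t
    have hfun : _root_.charFun (gaussianReal 0 1) = fun s : ℝ => ((Real.exp (-s ^ 2 / 2) : ℝ) : ℂ) :=
      funext charFun_gaussianReal
    rw [hfun] at hd1
    have hin : HasDerivAt (fun s : ℝ => -s ^ 2 / 2) (-t) t := by
      have hpow := ((hasDerivAt_pow 2 t).neg).div_const 2
      refine hpow.congr_deriv ?_
      norm_num
      ring
    have hd2 : HasDerivAt (fun s : ℝ => ((Real.exp (-s ^ 2 / 2) : ℝ) : ℂ))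
        ((Real.exp (-t ^ 2 / 2) * -t : ℝ) : ℂ) t := (hin.exp).ofReal_comp
    have huniq := hd1.unique hd2
    have hIB : ∫ z, Complex.I * z * Complex.exp (Complex.I * t * z) ∂(gaussianReal 0 1)
        = Complex.I * ∫ z, (z : ℂ) * Complex.exp (Complex.I * t * z) ∂(gaussianReal 0 1) := by
      rw [← integral_const_mul]
      congr 1
      funext z
      ring
    rw [hIB] at huniq
    refine mul_left_cancel₀ Complex.I_ne_zero ?_
    rw [huniq, show Complex.I * (Complex.I * ↑t * ψ)
      = Complex.I * Complex.I * ↑t * ψ by ring, Complex.I_mul_I, hψ_def, ← ht2]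
    push_cast
    ring
  -- integrable complex products
  have hexpYm : Measurable (fun ω => Complex.exp (Complex.I * t * Y ω)) :=
    (measurable_expI t).comp hYm
  have hbd1 : ∀ᵐ ω ∂μ, ‖Complex.exp (Complex.I * (t:ℝ) * (Y ω : ℝ))‖ ≤ 1 :=
    Filter.Eventually.of_forall fun ω => le_of_eq (norm_expI t (Y ω))
  have intXc : Integrable (fun ω => Complex.exp (Complex.I * t * Y ω) * (X ω : ℂ)) μ :=
    (hX1.ofReal).bdd_mul hexpYm.aestronglyMeasurable hbd1
  have intZc : Integrable (fun ω => Complex.exp (Complex.I * t * Y ω) * (Z ω : ℂ)) μ :=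
    (hZ1.ofReal).bdd_mul hexpYm.aestronglyMeasurable hbd1
  have intgYc : Integrable (fun ω => Complex.exp (Complex.I * t * Y ω) * (g (Y ω) : ℂ)) μ :=
    (hgY1.ofReal).bdd_mul hexpYm.aestronglyMeasurable hbd1
  have intfLc : Integrable
      (fun ω => Complex.exp (Complex.I * t * Y ω) * ((Real.sqrt γ * Y ω / (1 + γ) : ℝ) : ℂ)) μ :=
    (hfL1.ofReal).bdd_mul hexpYm.aestronglyMeasurable hbd1
  -- independence computations
  have E1 : ∫ ω, Complex.exp (Complex.I * t * Y ω) * (X ω : ℂ) ∂μ = B * ψ := by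
    have e : ∀ ω, Complex.exp (Complex.I * t * Y ω) * (X ω : ℂ)
        = (fun x : ℝ => (x : ℂ) * Complex.exp (Complex.I * u * x)) (X ω)
          * (fun z : ℝ => Complex.exp (Complex.I * t * z)) (Z ω) := by
      intro ω
      simp only
      rw [hexp ω]
      ring
    rw [integral_congr_ae (Filter.Eventually.of_forall e),
      indep_mul_integral μ hX hZ hindep (F := fun x : ℝ => (x : ℂ) * Complex.exp (Complex.I * u * x))
        (Complex.measurable_ofReal.mul (measurable_expI u)) (measurable_expI t),
      hZint _ (measurable_expI t), hGauss1]
  have E2 : ∫ ω, Complex.exp (Complex.I * t * Y ω) ∂μ = A * ψ := by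
    have e : ∀ ω, Complex.exp (Complex.I * t * Y ω)
        = (fun x : ℝ => Complex.exp (Complex.I * u * x)) (X ω)
          * (fun z : ℝ => Complex.exp (Complex.I * t * z)) (Z ω) := fun ω => hexp ω
    rw [integral_congr_ae (Filter.Eventually.of_forall e),
      indep_mul_integral μ hX hZ hindep (measurable_expI u) (measurable_expI t),
      hZint _ (measurable_expI t), hGauss1, hAeq]
  have E3 : ∫ ω, Complex.exp (Complex.I * t * Y ω) * (Z ω : ℂ) ∂μ
      = A * (Complex.I * t * ψ) := by
    have e : ∀ ω, Complex.exp (Complex.I * t * Y ω) * (Z ω : ℂ)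
        = (fun x : ℝ => Complex.exp (Complex.I * u * x)) (X ω)
          * (fun z : ℝ => (z : ℂ) * Complex.exp (Complex.I * t * z)) (Z ω) := by
      intro ω
      simp only
      rw [hexp ω]
      ring
    rw [integral_congr_ae (Filter.Eventually.of_forall e),
      indep_mul_integral μ hX hZ hindep (G := fun z : ℝ => (z : ℂ) * Complex.exp (Complex.I * t * z)) (measurable_expI u)
        (Complex.measurable_ofReal.mul (measurable_expI t)),
      hZint (fun z : ℝ => (z : ℂ) * Complex.exp (Complex.I * t * z)) (Complex.measurable_ofReal.mul (measurable_expI t)), hGauss2, hAeq]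
  -- orthogonality
  have hR : ∀ c : ℝ → ℝ, Measurable c → (∀ y, |c y| ≤ 1) →
      ∫ ω, c (Y ω) * X ω ∂μ = ∫ ω, c (Y ω) * g (Y ω) ∂μ := by
    intro c hc hbc
    have hmY : @Measurable Ω ℝ (MeasurableSpace.comap Y inferInstance) _ Y :=
      measurable_iff_comap_le.mpr le_rfl
    have hsm := (hc.comp hmY).stronglyMeasurable
    have hmul := condExp_stronglyMeasurable_mul_of_bound hm hsm hX1 1
      (Filter.Eventually.of_forall fun ω => by
        rw [Real.norm_eq_abs]; exact hbc (Y ω))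
    calc ∫ ω, c (Y ω) * X ω ∂μ
        = ∫ ω, (μ[(fun ω => c (Y ω)) * X|MeasurableSpace.comap Y inferInstance]) ω ∂μ := (integral_condExp hm).symm
      _ = ∫ ω, ((fun ω => c (Y ω)) * μ[X|MeasurableSpace.comap Y inferInstance]) ω ∂μ := integral_congr_ae hmul
      _ = ∫ ω, c (Y ω) * g (Y ω) ∂μ := by
          refine integral_congr_ae (hcond.mono fun ω hω => ?_)
          simp only [Pi.mul_apply]
          rw [hω]
  have key : ∀ q : Ω → ℝ, Integrable q μ →
      ∫ ω, Complex.exp (Complex.I * t * Y ω) * (q ω : ℂ) ∂μ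
        = ((∫ ω, Real.cos (t * Y ω) * q ω ∂μ : ℝ) : ℂ)
          + ((∫ ω, Real.sin (t * Y ω) * q ω ∂μ : ℝ) : ℂ) * Complex.I := by
    intro q hq
    have hcosm : Measurable fun ω => Real.cos (t * Y ω) :=
      Real.measurable_cos.comp (hYm.const_mul t)
    have hsinm : Measurable fun ω => Real.sin (t * Y ω) :=
      Real.measurable_sin.comp (hYm.const_mul t)
    have i1 : Integrable (fun ω => Real.cos (t * Y ω) * q ω) μ :=
      hq.bdd_mul hcosm.aestronglyMeasurable
        (Filter.Eventually.of_forall fun ω => by rw [Real.norm_eq_abs]; exact Real.abs_cos_le_one _)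
    have i2 : Integrable (fun ω => Real.sin (t * Y ω) * q ω) μ :=
      hq.bdd_mul hsinm.aestronglyMeasurable
        (Filter.Eventually.of_forall fun ω => by rw [Real.norm_eq_abs]; exact Real.abs_sin_le_one _)
    have e : ∀ ω, Complex.exp (Complex.I * t * Y ω) * (q ω : ℂ)
        = ((Real.cos (t * Y ω) * q ω : ℝ) : ℂ)
          + ((Real.sin (t * Y ω) * q ω : ℝ) : ℂ) * Complex.I := by
      intro ω
      rw [show (Complex.I * t * (Y ω : ℂ)) = ((t * Y ω : ℝ) : ℂ) * Complex.I by
        push_cast; ring, Complex.exp_mul_I, ← Complex.ofReal_cos, ← Complex.ofReal_sin]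
      push_cast
      ring
    have j1 : Integrable (fun ω => ((Real.cos (t * Y ω) * q ω : ℝ) : ℂ)) μ := i1.ofReal
    have j2 : Integrable (fun ω => ((Real.sin (t * Y ω) * q ω : ℝ) : ℂ) * Complex.I) μ :=
      (i2.ofReal).mul_const _
    rw [integral_congr_ae (Filter.Eventually.of_forall e), integral_add j1 j2,
      integral_mul_const]
    congr 1
    · exact integral_ofReal
    · congr 1
      exact integral_ofReal
  have OC : ∫ ω, Complex.exp (Complex.I * t * Y ω) * (X ω : ℂ) ∂μ
      = ∫ ω, Complex.exp (Complex.I * t * Y ω) * (g (Y ω) : ℂ) ∂μ := by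
    have hc1 := hR (fun y => Real.cos (t * y))
      (Real.measurable_cos.comp (measurable_id.const_mul t)) (fun y => Real.abs_cos_le_one _)
    have hc2 := hR (fun y => Real.sin (t * y))
      (Real.measurable_sin.comp (measurable_id.const_mul t)) (fun y => Real.abs_sin_le_one _)
    rw [key X hX1, key (fun ω => g (Y ω)) hgY1, hc1, hc2]
  have E4 : ∫ ω, Complex.exp (Complex.I * t * Y ω) * ((Real.sqrt γ * Y ω / (1 + γ) : ℝ) : ℂ) ∂μ
      = ((Real.sqrt γ / (1 + γ) : ℝ) : ℂ)
        * (((Real.sqrt γ : ℝ) : ℂ) * (B * ψ) + A * (Complex.I * t * ψ)) := by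
    have e : ∀ ω, Complex.exp (Complex.I * t * Y ω) * ((Real.sqrt γ * Y ω / (1 + γ) : ℝ) : ℂ)
        = ((Real.sqrt γ / (1 + γ) : ℝ) : ℂ)
          * (((Real.sqrt γ : ℝ) : ℂ) * (Complex.exp (Complex.I * t * Y ω) * (X ω : ℂ))
            + Complex.exp (Complex.I * t * Y ω) * (Z ω : ℂ)) := by
      intro ω
      rw [hYω ω]
      push_cast
      ring
    rw [integral_congr_ae (Filter.Eventually.of_forall e), integral_const_mul]
    rw [integral_add (intXc.const_mul _) intZc, integral_const_mul, E1, E3]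
  have hdiff : ∫ ω, Complex.exp (Complex.I * t * Y ω)
        * ((g (Y ω) - Real.sqrt γ * Y ω / (1 + γ) : ℝ) : ℂ) ∂μ
      = B * ψ - ((Real.sqrt γ / (1 + γ) : ℝ) : ℂ)
        * (((Real.sqrt γ : ℝ) : ℂ) * (B * ψ) + A * (Complex.I * t * ψ)) := by
    have e : ∀ ω, Complex.exp (Complex.I * t * Y ω)
          * ((g (Y ω) - Real.sqrt γ * Y ω / (1 + γ) : ℝ) : ℂ)
        = Complex.exp (Complex.I * t * Y ω) * (g (Y ω) : ℂ)
          - Complex.exp (Complex.I * t * Y ω) * ((Real.sqrt γ * Y ω / (1 + γ) : ℝ) : ℂ) := by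
      intro ω
      push_cast
      ring
    rw [integral_congr_ae (Filter.Eventually.of_forall e), integral_sub intgYc intfLc,
      ← OC, E1, E4]
  -- Cauchy-Schwarz bound
  have hCS : ‖∫ ω, Complex.exp (Complex.I * t * Y ω)
      * ((g (Y ω) - Real.sqrt γ * Y ω / (1 + γ) : ℝ) : ℂ) ∂μ‖ ≤ Real.sqrt ε := by
    calc ‖∫ ω, Complex.exp (Complex.I * t * Y ω)
        * ((g (Y ω) - Real.sqrt γ * Y ω / (1 + γ) : ℝ) : ℂ) ∂μ‖
        ≤ ∫ ω, ‖Complex.exp (Complex.I * t * Y ω)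
          * ((g (Y ω) - Real.sqrt γ * Y ω / (1 + γ) : ℝ) : ℂ)‖ ∂μ :=
          norm_integral_le_integral_norm _
      _ = ∫ ω, |g (Y ω) - Real.sqrt γ * Y ω / (1 + γ)| ∂μ := by
          refine integral_congr_ae (Filter.Eventually.of_forall fun ω => ?_)
          simp only [norm_mul, norm_expI, one_mul, Complex.norm_real, Real.norm_eq_abs]
      _ ≤ Real.sqrt (∫ ω, (g (Y ω) - Real.sqrt γ * Y ω / (1 + γ)) ^ 2 ∂μ) := l1_le_sqrt_l2 μ hh2
      _ ≤ Real.sqrt ε := by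
          refine Real.sqrt_le_sqrt ?_
          have heq : (∫ ω, (g (Y ω) - Real.sqrt γ * Y ω / (1 + γ)) ^ 2 ∂μ)
              = ∫ ω, |g (Y ω) - Real.sqrt γ * Y ω / (1 + γ)| ^ 2 ∂μ :=
            integral_congr_ae (Filter.Eventually.of_forall fun ω => (_root_.sq_abs _).symm)
          rw [heq]
          exact hmmse
  -- final algebra
  have hγc : ((Real.sqrt γ : ℝ) : ℂ) * ((Real.sqrt γ : ℝ) : ℂ) = (γ : ℂ) := by
    rw [← Complex.ofReal_mul, Real.mul_self_sqrt hγ.le]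
  have huc : ((Real.sqrt γ : ℝ) : ℂ) * (t : ℂ) = (u : ℂ) := by
    rw [← Complex.ofReal_mul, hu]
  have h1γpos : (0:ℝ) < 1 + γ := by linarith
  have h1γ : ((1 + γ : ℝ) : ℂ) ≠ 0 := by
    rw [Complex.ofReal_ne_zero]; positivity
  have h1γc : (1 + (γ : ℂ)) ≠ 0 := by
    rw [show (1 + (γ:ℂ)) = ((1 + γ : ℝ) : ℂ) from by push_cast; ring]
    exact h1γ
  have hval : B * ψ - ((Real.sqrt γ / (1 + γ) : ℝ) : ℂ)
        * (((Real.sqrt γ : ℝ) : ℂ) * (B * ψ) + A * (Complex.I * t * ψ))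
      = (-Complex.I * ψ / ((1 + γ : ℝ) : ℂ)) * (Complex.I * B + (u : ℂ) * A) := by
    have hsub : ((Real.sqrt γ / (1 + γ) : ℝ) : ℂ)
        = ((Real.sqrt γ : ℝ) : ℂ) / ((1 + γ : ℝ) : ℂ) := by push_cast; ring
    have hIB2 : -Complex.I * (Complex.I * B + (u:ℂ) * A) = B - Complex.I * (u:ℂ) * A := by
      rw [show -Complex.I * (Complex.I * B + (u:ℂ) * A)
        = -(Complex.I * Complex.I) * B - Complex.I * (u:ℂ) * A from by ring, Complex.I_mul_I]
      ring
    rw [hsub]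
    rw [show (-Complex.I * ψ / ((1 + γ : ℝ) : ℂ)) * (Complex.I * B + (u:ℂ) * A)
      = (ψ / ((1 + γ : ℝ) : ℂ)) * (-Complex.I * (Complex.I * B + (u:ℂ) * A)) from by ring, hIB2]
    rw [show ((Real.sqrt γ : ℝ) : ℂ) / ((1 + γ : ℝ) : ℂ)
          * (((Real.sqrt γ : ℝ) : ℂ) * (B * ψ) + A * (Complex.I * (t:ℂ) * ψ))
        = (((Real.sqrt γ : ℝ) : ℂ) * ((Real.sqrt γ : ℝ) : ℂ) * (B * ψ)
          + A * (Complex.I * (((Real.sqrt γ : ℝ) : ℂ) * (t:ℂ)) * ψ)) / ((1 + γ : ℝ) : ℂ)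
        from by ring, hγc, huc]
    field_simp [h1γc]
    push_cast; ring
  have hfin : Real.exp (-u ^ 2 / (2 * γ)) * ‖Complex.I * B + (u : ℂ) * A‖
      = (1 + γ) * ‖(-Complex.I * ψ / ((1 + γ : ℝ) : ℂ)) * (Complex.I * B + (u : ℂ) * A)‖ := by
    rw [norm_mul, norm_div, norm_mul, norm_neg, Complex.norm_I, one_mul, hψnorm,
      Complex.norm_real, Real.norm_eq_abs, abs_of_pos h1γpos]
    field_simp
  rw [hDval, hfin]
  rw [← hval, ← hdiff]
  have h1γ' : (0:ℝ) ≤ 1 + γ := h1γpos.le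
  calc (1 + γ) * ‖∫ ω, Complex.exp (Complex.I * t * Y ω)
      * ((g (Y ω) - Real.sqrt γ * Y ω / (1 + γ) : ℝ) : ℂ) ∂μ‖
      ≤ (1 + γ) * Real.sqrt ε := mul_le_mul_of_nonneg_left hCS h1γ'
end

section
/- Let X and Z be independent real random variables, Z ~ N(0,1). If the KL divergence D(N(0,1) ‖ P_X * N(0,1)) ≤ 2ε with 0 < ε ≤ 1, then P[|X| > ε^{1/8}] ≤ 108·ε^{1/8}. -/
open MeasureTheory ProbabilityTheory Real
open scoped ENNReal NNReal

set_option linter.unusedSectionVars false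
set_option maxHeartbeats 1000000

/-- Kullback-Leibler divergence (in nats). -/
noncomputable def klDiv {α : Type*} [MeasurableSpace α] (P Q : Measure α) : ℝ :=
  ∫ x, Real.log ((P.rnDeriv Q x).toReal) ∂P

section Lemmas

-- scalar lemma L1
lemma L1 {t : ℝ} (ht0 : 0 ≤ t) (ht1 : t ≤ 1) : (1 - t)^2 / 2 ≤ t * Real.log t - t + 1 := by
  rcases eq_or_lt_of_le ht0 with h|h
  · simp [← h]; nlinarith
  · have hlog : ∫ s in t..1, Real.log s = 1 * Real.log 1 - t * Real.log t - 1 + t :=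
      integral_log
    have h2 : ∫ s in t..1, (1 - s) = (1-t)^2/2 := by
      simp [intervalIntegral.integral_sub intervalIntegrable_const intervalIntegral.intervalIntegrable_id]
      ring
    have hmono : ∫ s in t..1, (1 - s) ≤ ∫ s in t..1, (- Real.log s) := by
      apply intervalIntegral.integral_mono_on ht1
      · exact intervalIntegrable_const.sub intervalIntegral.intervalIntegrable_id
      · exact (intervalIntegral.intervalIntegrable_log (by simp [Set.uIcc_of_le ht1]; exact h)).neg
      · intro s hs
        have := Real.log_le_sub_one_of_pos (lt_of_lt_of_le h hs.1)
        linarith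
    rw [h2] at hmono
    rw [intervalIntegral.integral_neg, hlog] at hmono
    simp at hmono
    linarith

lemma Lh_nonneg {t : ℝ} (ht0 : 0 ≤ t) : 0 ≤ t * Real.log t - t + 1 := by
  rcases le_or_gt t 1 with h|h
  · nlinarith [L1 ht0 h]
  · have h0 : (0:ℝ) < 1/t := by positivity
    have := Real.log_le_sub_one_of_pos h0
    rw [Real.log_div one_ne_zero (by positivity)] at this
    simp at this
    have h2 : t * (t⁻¹ + Real.log t) ≥ t * 1 := by
      apply mul_le_mul_of_nonneg_left this (by linarith)
    rw [mul_add, mul_inv_cancel₀ (by linarith : t ≠ 0)] at h2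
    nlinarith

lemma Lpt {t lam : ℝ} (ht0 : 0 ≤ t) (hlam : 0 < lam) :
    max (1 - t) 0 ≤ (t * Real.log t - t + 1) / lam + lam / 2 := by
  rcases le_or_gt t 1 with h|h
  · rw [max_eq_left (by linarith)]
    have := L1 ht0 h
    rw [div_add_div _ _ (ne_of_gt hlam) two_ne_zero, le_div_iff₀ (by positivity)]
    nlinarith [sq_nonneg (1 - t - lam)]
  · rw [max_eq_right (by linarith)]
    have := Lh_nonneg ht0
    positivity

noncomputable def pdfr (x : ℝ) : ℝ := (Real.sqrt (2*π))⁻¹ * rexp (-x^2/2)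

lemma pdfr_eq (x : ℝ) : gaussianPDFReal 0 1 x = pdfr x := by
  simp [gaussianPDFReal, pdfr]

lemma pdfr_pos (x : ℝ) : 0 < pdfr x := by
  have := Real.pi_pos
  unfold pdfr; positivity

lemma pdfr_mono {x y : ℝ} (h : |x| ≤ |y|) : pdfr y ≤ pdfr x := by
  unfold pdfr
  have := Real.pi_pos
  have hxy : x^2 ≤ y^2 := by
    rw [← sq_abs x, ← sq_abs y]
    exact pow_le_pow_left₀ (abs_nonneg x) h 2
  exact mul_le_mul_of_nonneg_left (Real.exp_le_exp.mpr (by linarith)) (by positivity)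

lemma pdfr_integrable : Integrable pdfr := by
  unfold pdfr
  apply Integrable.const_mul
  have : ∀ x:ℝ, -x^2/2 = -(1/2 : ℝ) * x^2 := by intro x; ring
  simp_rw [this]
  exact integrable_exp_neg_mul_sq (by norm_num)

lemma NIcc {a b : ℝ} (hab : a ≤ b) :
    ((gaussianReal 0 1) (Set.Icc a b)).toReal = ∫ x in a..b, pdfr x := by
  rw [gaussianReal_apply_eq_integral 0 one_ne_zero]
  rw [ENNReal.toReal_ofReal (setIntegral_nonneg measurableSet_Icc
    (fun x _ => gaussianPDFReal_nonneg 0 1 x))]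
  rw [MeasureTheory.integral_Icc_eq_integral_Ioc, ← intervalIntegral.integral_of_le hab]
  exact intervalIntegral.integral_congr (fun x _ => pdfr_eq x)

lemma anderson {c δ : ℝ} (hδ : 0 ≤ δ) :
    ∫ x in (c-δ)..(c+δ), pdfr x ≤ ∫ x in (-δ)..δ, pdfr x := by
  have hint : ∀ a b : ℝ, IntervalIntegrable pdfr volume a b :=
    fun a b => pdfr_integrable.intervalIntegrable
  -- wlog c ≥ 0
  have key : ∀ c : ℝ, 0 ≤ c → ∫ x in (c-δ)..(c+δ), pdfr x ≤ ∫ x in (-δ)..δ, pdfr x := by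
    intro c hc
    have h1 : (∫ x in (-δ)..δ, pdfr x) - ∫ x in (c-δ)..(c+δ), pdfr x
        = (∫ x in (-δ)..(c-δ), pdfr x) - ∫ x in δ..(c+δ), pdfr x := by
      rw [← intervalIntegral.integral_add_adjacent_intervals (hint (-δ) (c-δ)) (hint (c-δ) δ),
        ← intervalIntegral.integral_add_adjacent_intervals (hint (c-δ) δ) (hint δ (c+δ))]
      ring
    have h2 : ∫ x in δ..(c+δ), pdfr x = ∫ x in (-δ)..(c-δ), pdfr (x + 2*δ) := by
      rw [intervalIntegral.integral_comp_add_right (fun x => pdfr x) (2*δ)]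
      norm_num
      ring_nf
    have h3 : ∫ x in (-δ)..(c-δ), pdfr (x + 2*δ) ≤ ∫ x in (-δ)..(c-δ), pdfr x := by
      apply intervalIntegral.integral_mono_on (by linarith)
      · exact (pdfr_integrable.comp_add_right (2*δ)).intervalIntegrable
      · exact hint _ _
      · intro x hx
        apply pdfr_mono
        rcases le_or_gt 0 x with h|h
        · rw [abs_of_nonneg h, abs_of_nonneg (by linarith)]; linarith
        · have hx1 := hx.1
          rw [abs_of_neg h]
          rw [abs_of_nonneg (by linarith)]
          linarith
    linarith [h1, h2 ▸ h3]
  rcases le_or_gt 0 c with h|h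
  · exact key c h
  · have heven : ∀ x : ℝ, pdfr (-x) = pdfr x := by
      intro x; unfold pdfr; norm_num
    have hsym : ∫ x in (c-δ)..(c+δ), pdfr x = ∫ x in ((-c)-δ)..((-c)+δ), pdfr x := by
      have h := intervalIntegral.integral_comp_neg (a := (-c)-δ) (b := (-c)+δ) (f := pdfr)
      simp_rw [heven] at h
      rw [h]
      norm_num
      ring_nf
    rw [hsym]
    exact key (-c) (by linarith)

lemma far_bound {c δ : ℝ} (hδ : 0 ≤ δ) (hc : 3*δ ≤ |c|) :
    ∫ x in (c-δ)..(c+δ), pdfr x ≤ 2*δ*pdfr (2*δ) := by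
  have h1 : ∫ x in (c-δ)..(c+δ), pdfr x ≤ ∫ _x in (c-δ)..(c+δ), pdfr (2*δ) := by
    apply intervalIntegral.integral_mono_on (by linarith)
      pdfr_integrable.intervalIntegrable intervalIntegrable_const
    intro x hx
    apply pdfr_mono
    rw [abs_of_nonneg (by linarith)]
    rcases abs_cases c with ⟨h,_⟩|⟨h,_⟩
    · rw [abs_of_nonneg (by nlinarith [hx.1])]
      nlinarith [hx.1]
    · rw [abs_of_nonpos (by nlinarith [hx.2])]
      nlinarith [hx.2]
  calc ∫ x in (c-δ)..(c+δ), pdfr x ≤ ∫ _x in (c-δ)..(c+δ), pdfr (2*δ) := h1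
  _ = 2*δ*pdfr (2*δ) := by rw [intervalIntegral.integral_const, smul_eq_mul]; ring

lemma sqrt2pi_lt : Real.sqrt (2*π) < 2.51 := by
  rw [show (2.51:ℝ) = Real.sqrt (2.51^2) by rw [Real.sqrt_sq (by norm_num)]]
  apply Real.sqrt_lt_sqrt (by positivity)
  nlinarith [Real.pi_lt_d2]

lemma center_bound {δ : ℝ} (h0 : 0 < δ) (h3 : δ ≤ 1/3) :
    2*δ*pdfr (2*δ) + δ^3 ≤ ∫ x in (-δ)..δ, pdfr x := by
  have hπ := Real.pi_pos
  set c := (Real.sqrt (2*π))⁻¹ with hc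
  have hcpos : 0 < c := by positivity
  have hclb : 0.398 ≤ c := by
    rw [hc, le_inv_comm₀ (by norm_num) (by positivity)]
    calc Real.sqrt (2*π) ≤ 2.51 := sqrt2pi_lt.le
    _ ≤ 0.398⁻¹ := by norm_num
  have hlow : c * (2*δ - δ^3/3) ≤ ∫ x in (-δ)..δ, pdfr x := by
    have hpt : ∀ x ∈ Set.Icc (-δ) δ, c * (1 - x^2/2) ≤ pdfr x := by
      intro x _
      unfold pdfr
      apply mul_le_mul_of_nonneg_left _ hcpos.le
      have := Real.add_one_le_exp (-x^2/2)
      linarith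
    have hint : ∫ x in (-δ)..δ, (c * (1 - x^2/2)) ≤ ∫ x in (-δ)..δ, pdfr x := by
      apply intervalIntegral.integral_mono_on (by linarith)
        (by apply IntervalIntegrable.const_mul; apply IntervalIntegrable.sub <;>
              apply ContinuousOn.intervalIntegrable <;> fun_prop)
        pdfr_integrable.intervalIntegrable hpt
    have hval : ∫ x in (-δ)..δ, (c * (1 - x^2/2)) = c * (2*δ - δ^3/3) := by
      rw [intervalIntegral.integral_const_mul]
      congr 1
      rw [intervalIntegral.integral_sub intervalIntegrable_const
        (by apply IntervalIntegrable.div_const; exact (intervalIntegral.intervalIntegrable_pow 2))]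
      simp [intervalIntegral.integral_div, integral_pow]
      ring
    linarith
  have hexp : rexp (-(2*δ)^2/2) ≤ ((1+δ^2)^2)⁻¹ := by
    have h1 : (1+δ^2) ≤ rexp (δ^2) := by
      have := Real.add_one_le_exp (δ^2); linarith
    have h2 : (1+δ^2)^2 ≤ rexp (2*δ^2) := by
      have he := Real.exp_add (δ^2) (δ^2)
      rw [show δ^2 + δ^2 = 2*δ^2 by ring] at he
      nlinarith [Real.exp_pos (δ^2)]
    rw [show -(2*δ)^2/2 = -(2*δ^2) by ring, Real.exp_neg]
    exact inv_anti₀ (by positivity) h2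
  have hup : 2*δ*pdfr (2*δ) ≤ 2*δ*c*((1+δ^2)^2)⁻¹ := by
    unfold pdfr
    rw [show 2*δ*(c * rexp (-(2*δ)^2/2)) = 2*δ*c*rexp (-(2*δ)^2/2) by ring]
    apply mul_le_mul_of_nonneg_left hexp (by positivity)
  have hpoly : 2*δ*c*((1+δ^2)^2)⁻¹ + δ^3 ≤ c * (2*δ - δ^3/3) := by
    rw [← sub_nonneg]
    have hd : (0:ℝ) < (1+δ^2)^2 := by positivity
    have key : c * (2*δ - δ^3/3) - (2*δ*c*((1+δ^2)^2)⁻¹ + δ^3)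
        = (c * ((2*δ - δ^3/3)*(1+δ^2)^2 - 2*δ) - δ^3*(1+δ^2)^2) / (1+δ^2)^2 := by
      field_simp
      ring
    rw [key]
    apply div_nonneg _ hd.le
    have hinner : (11/3)*δ^3 ≤ (2*δ - δ^3/3)*(1+δ^2)^2 - 2*δ := by
      have hδ2 : δ^2 ≤ 4 := by nlinarith
      nlinarith [mul_le_mul_of_nonneg_left hδ2 (le_of_lt (pow_pos h0 5))]
    have hstep : 0.398*((11/3)*δ^3) ≤ c * ((2*δ - δ^3/3)*(1+δ^2)^2 - 2*δ) := by
      apply mul_le_mul hclb hinner (by positivity) hcpos.le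
    have hrhs : δ^3*(1+δ^2)^2 ≤ δ^3 * (10/9)^2 := by
      have h19 : (1+δ^2)^2 ≤ (10/9)^2 := by
        have hsq : δ^2 ≤ 1/9 := by nlinarith
        nlinarith [sq_nonneg (δ^2)]
      exact mul_le_mul_of_nonneg_left h19 (by positivity)
    nlinarith [pow_pos h0 3]
  linarith


variable (PX : Measure ℝ) [IsProbabilityMeasure PX]

noncomputable def qdens (x : ℝ) : ℝ≥0∞ := ∫⁻ t, gaussianPDF 0 1 (x - t) ∂PX

lemma qdens_meas : Measurable (qdens PX) := by
  unfold qdens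
  apply Measurable.lintegral_prod_right
  exact (measurable_gaussianPDF 0 1).comp (measurable_fst.sub measurable_snd)

lemma conv_apply' {S : Set ℝ} (hS : MeasurableSet S) :
    (PX.conv (gaussianReal 0 1)) S = ∫⁻ t, (gaussianReal 0 1) {y | t + y ∈ S} ∂PX := by
  rw [Measure.conv, Measure.map_apply measurable_add hS, Measure.prod_apply (measurable_add hS)]
  rfl

lemma conv_eq_withDensity :
    PX.conv (gaussianReal 0 1) = volume.withDensity (qdens PX) := by
  ext S hS
  rw [conv_apply' PX hS, withDensity_apply _ hS]
  have h1 : ∀ t : ℝ, (gaussianReal 0 1) {y | t + y ∈ S}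
      = ∫⁻ x, S.indicator (fun x => gaussianPDF 0 1 (x - t)) x := by
    intro t
    have hmap : (gaussianReal 0 1) {y | t + y ∈ S} = ((gaussianReal 0 1).map (t + ·)) S := by
      rw [Measure.map_apply (measurable_const_add t) hS]
      rfl
    rw [hmap, gaussianReal_map_const_add, gaussianReal_apply _ one_ne_zero,
      ← lintegral_indicator hS]
    congr 1
    ext x
    by_cases hx : x ∈ S <;>
      simp [hx, gaussianPDF, gaussianPDFReal_sub, zero_add]
  simp_rw [h1]
  rw [lintegral_lintegral_swap]
  · rw [← lintegral_indicator hS]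
    congr 1
    ext x
    unfold Set.indicator qdens
    by_cases hx : x ∈ S <;> simp [hx]
  · apply (Measurable.aemeasurable _)
    apply Measurable.indicator
    · exact (measurable_gaussianPDF 0 1).comp (measurable_snd.sub measurable_fst)
    · exact measurable_snd hS

-- upper bound
lemma pdfr_le (x : ℝ) : pdfr x ≤ (Real.sqrt (2*π))⁻¹ := by
  have hπ := Real.pi_pos
  have h1 : rexp (-x^2/2) ≤ 1 := by
    rw [Real.exp_le_one_iff]; nlinarith [sq_nonneg x]
  calc pdfr x ≤ (Real.sqrt (2*π))⁻¹ * 1 := by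
        exact mul_le_mul_of_nonneg_left h1 (by positivity)
  _ = _ := mul_one _

lemma qdens_le (x : ℝ) : qdens PX x ≤ ENNReal.ofReal ((Real.sqrt (2*π))⁻¹) := by
  unfold qdens
  calc ∫⁻ t, gaussianPDF 0 1 (x - t) ∂PX
      ≤ ∫⁻ _t, ENNReal.ofReal ((Real.sqrt (2*π))⁻¹) ∂PX := by
        apply lintegral_mono
        intro t
        show ENNReal.ofReal (gaussianPDFReal 0 1 (x - t)) ≤ _
        rw [pdfr_eq]
        exact ENNReal.ofReal_le_ofReal (pdfr_le _)
  _ = ENNReal.ofReal ((Real.sqrt (2*π))⁻¹) := by simp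

lemma exists_R : ∃ R : ℝ, 0 < R ∧ (1:ℝ≥0∞)/2 ≤ PX (Set.Icc (-R) R) := by
  have hU : ⋃ n : ℕ, Set.Icc (-(n:ℝ)) n = Set.univ := by
    ext x
    simp only [Set.mem_iUnion, Set.mem_Icc, Set.mem_univ, iff_true]
    obtain ⟨n, hn⟩ := exists_nat_gt |x| 
    exact ⟨n, by rcases abs_le.mp hn.le with ⟨h1,h2⟩; constructor <;> linarith⟩
  have hmono : Monotone (fun n : ℕ => Set.Icc (-(n:ℝ)) n) := by
    intro a b hab
    apply Set.Icc_subset_Icc <;> simp [Nat.cast_le.mpr hab]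
  have := tendsto_measure_iUnion_atTop (μ := PX) hmono
  rw [hU] at this
  have h1 : PX Set.univ = 1 := measure_univ
  rw [h1] at this
  have h2 := this.eventually (eventually_ge_nhds (by norm_num : (1:ℝ≥0∞)/2 < 1))
  obtain ⟨n, hn1, hn2⟩ := (h2.and (Filter.eventually_ge_atTop 1)).exists
  exact ⟨n, by exact_mod_cast Nat.lt_of_lt_of_le Nat.zero_lt_one hn2, hn1⟩

lemma qdens_ge {R : ℝ} (hR : 0 < R) (hPX : (1:ℝ≥0∞)/2 ≤ PX (Set.Icc (-R) R)) (x : ℝ) :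
    ENNReal.ofReal (pdfr (|x| + R)) / 2 ≤ qdens PX x := by
  have h1 : ∀ t ∈ Set.Icc (-R) R, ENNReal.ofReal (pdfr (|x| + R)) ≤ gaussianPDF 0 1 (x - t) := by
    intro t ht
    unfold gaussianPDF
    rw [pdfr_eq]
    apply ENNReal.ofReal_le_ofReal
    apply pdfr_mono
    rw [abs_of_nonneg (by positivity : (0:ℝ) ≤ |x| + R)]
    rcases ht with ⟨ht1, ht2⟩
    rw [abs_sub_comm] at *
    calc |t - x| ≤ |t| + |x| := abs_sub _ _
    _ ≤ R + |x| := by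
        have : |t| ≤ R := abs_le.mpr ⟨ht1, ht2⟩
        linarith
    _ = |x| + R := by ring
  calc ENNReal.ofReal (pdfr (|x| + R)) / 2
      = ENNReal.ofReal (pdfr (|x| + R)) * ((1:ℝ≥0∞)/2) := by
        rw [ENNReal.div_eq_inv_mul, ENNReal.div_eq_inv_mul]; ring
  _ ≤ ENNReal.ofReal (pdfr (|x| + R)) * PX (Set.Icc (-R) R) := by
        exact mul_le_mul_right hPX _
  _ = ∫⁻ _t in Set.Icc (-R) R, ENNReal.ofReal (pdfr (|x| + R)) ∂PX := by
        rw [setLIntegral_const]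
  _ ≤ ∫⁻ t in Set.Icc (-R) R, gaussianPDF 0 1 (x - t) ∂PX := by
        apply setLIntegral_mono' measurableSet_Icc h1
  _ ≤ qdens PX x := by
        unfold qdens
        exact setLIntegral_le_lintegral _ _

lemma qdens_ne_zero (x : ℝ) : qdens PX x ≠ 0 := by
  obtain ⟨R, hR, hPX⟩ := exists_R PX
  have h := qdens_ge PX hR hPX x
  intro h0
  rw [h0, le_zero_iff] at h
  rw [ENNReal.div_eq_zero_iff] at h
  rcases h with h|h
  · rw [ENNReal.ofReal_eq_zero] at h
    exact absurd h (not_le.mpr (pdfr_pos _))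
  · norm_num at h

lemma qdens_ne_top (x : ℝ) : qdens PX x ≠ ∞ :=
  ne_top_of_le_ne_top ENNReal.ofReal_ne_top (qdens_le PX x)

lemma vol_ac_Q : (volume : Measure ℝ) ≪ PX.conv (gaussianReal 0 1) := by
  rw [conv_eq_withDensity]
  exact withDensity_absolutelyContinuous' (qdens_meas PX).aemeasurable
    (ae_of_all _ (qdens_ne_zero PX))

lemma Q_ac_vol : PX.conv (gaussianReal 0 1) ≪ (volume : Measure ℝ) := by
  rw [conv_eq_withDensity]
  exact withDensity_absolutelyContinuous _ _

lemma N_ac_Q : gaussianReal 0 1 ≪ PX.conv (gaussianReal 0 1) :=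
  (gaussianReal_absolutelyContinuous 0 one_ne_zero).trans (vol_ac_Q PX)

lemma rnDeriv_eq_ratio :
    (gaussianReal 0 1).rnDeriv (PX.conv (gaussianReal 0 1))
      =ᵐ[volume] fun x => gaussianPDF 0 1 x / qdens PX x := by
  have hmeas : Measurable (fun x => gaussianPDF 0 1 x / qdens PX x) :=
    (measurable_gaussianPDF 0 1).div (qdens_meas PX)
  have hN : gaussianReal 0 1
      = (PX.conv (gaussianReal 0 1)).withDensity (fun x => gaussianPDF 0 1 x / qdens PX x) := by
    rw [conv_eq_withDensity, ← withDensity_mul _ (qdens_meas PX) hmeas]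
    rw [gaussianReal_of_var_ne_zero 0 one_ne_zero]
    apply withDensity_congr_ae
    apply ae_of_all
    intro x
    show gaussianPDF 0 1 x = qdens PX x * (gaussianPDF 0 1 x / qdens PX x)
    rw [ENNReal.mul_div_cancel (qdens_ne_zero PX x) (qdens_ne_top PX x)]
  have h := Measure.eq_rnDeriv (μ := gaussianReal 0 1) (ν := PX.conv (gaussianReal 0 1))
    hmeas Measure.MutuallySingular.zero_left (by rw [zero_add]; exact hN)
  exact ((vol_ac_Q PX).ae_eq h).symm

lemma log_ratio_bound {R : ℝ} (hR : 0 < R) (hPX : (1:ℝ≥0∞)/2 ≤ PX (Set.Icc (-R) R)) (x : ℝ) :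
    |Real.log ((gaussianPDF 0 1 x / qdens PX x).toReal)| ≤ x^2 + R^2 + Real.log 2 := by
  have hπ := Real.pi_pos
  set c' := (Real.sqrt (2*π))⁻¹ with hc'
  have hc'pos : 0 < c' := by positivity
  set qr := (qdens PX x).toReal with hqr
  have h1 : (gaussianPDF 0 1 x / qdens PX x).toReal = pdfr x / qr := by
    rw [ENNReal.toReal_div]
    congr 1
    unfold gaussianPDF
    rw [pdfr_eq, ENNReal.toReal_ofReal (pdfr_pos x).le]
  have hq_up : qr ≤ c' := ENNReal.toReal_le_of_le_ofReal hc'pos.le (qdens_le PX x)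
  have hq_lo : pdfr (|x|+R)/2 ≤ qr := by
    have h := ENNReal.toReal_mono (qdens_ne_top PX x) (qdens_ge PX hR hPX x)
    rw [ENNReal.toReal_div, ENNReal.toReal_ofReal (pdfr_pos _).le] at h
    norm_num at h
    exact h
  have hq_pos : 0 < qr := lt_of_lt_of_le (div_pos (pdfr_pos _) two_pos) hq_lo
  have hlogpdfr : ∀ y : ℝ, Real.log (pdfr y) = Real.log c' - y^2/2 := by
    intro y
    unfold pdfr
    rw [Real.log_mul hc'pos.ne' (Real.exp_ne_zero _), Real.log_exp]
    ring
  have ha : Real.log qr ≤ Real.log c' := Real.log_le_log hq_pos hq_up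
  have hb : Real.log c' - (|x|+R)^2/2 - Real.log 2 ≤ Real.log qr := by
    have := Real.log_le_log (div_pos (pdfr_pos _) two_pos) hq_lo
    rw [Real.log_div (pdfr_pos _).ne' two_ne_zero, hlogpdfr] at this
    linarith
  have hsq : (|x|+R)^2 ≤ 2*x^2 + 2*R^2 := by
    nlinarith [sq_nonneg (|x| - R), sq_abs x]
  have hlog2 : (0:ℝ) < Real.log 2 := Real.log_pos (by norm_num)
  rw [h1, Real.log_div (pdfr_pos x).ne' hq_pos.ne', hlogpdfr]
  rw [abs_le]
  constructor
  · nlinarith [sq_nonneg x, sq_nonneg R]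
  · nlinarith [sq_nonneg x]

lemma pdfr_cont : Continuous pdfr := by
  unfold pdfr; fun_prop

lemma integrable_sq_add (C : ℝ) (hC : 0 ≤ C) :
    Integrable (fun x => x^2 + C) (gaussianReal 0 1) := by
  rw [gaussianReal_of_var_ne_zero 0 one_ne_zero,
    integrable_withDensity_iff (measurable_gaussianPDF 0 1)
      (ae_of_all _ fun x => ENNReal.ofReal_lt_top)]
  have hpdf : ∀ x : ℝ, (gaussianPDF 0 1 x).toReal = pdfr x := by
    intro x
    unfold gaussianPDF
    rw [pdfr_eq, ENNReal.toReal_ofReal (pdfr_pos x).le]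
  have hπ := Real.pi_pos
  set c' := (Real.sqrt (2*π))⁻¹ with hc'
  have hc'pos : 0 < c' := by positivity
  apply Integrable.mono' (g := fun x => (c'*(C+4)) * rexp (-(1/4) * x^2))
  · exact (integrable_exp_neg_mul_sq (by norm_num)).const_mul _
  · have heq : (fun x : ℝ => (x^2 + C) * (gaussianPDF 0 1 x).toReal)
        = fun x => (x^2+C) * pdfr x := by funext x; rw [hpdf]
    rw [heq]
    exact (((continuous_pow 2).add continuous_const).mul pdfr_cont).aestronglyMeasurable
  · apply ae_of_all
    intro x
    rw [hpdf]
    have hu : (0:ℝ) ≤ x^2/4 := by positivity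
    have he1 : 1 + x^2/4 ≤ rexp (x^2/4) := by
      have := Real.add_one_le_exp (x^2/4); linarith
    have hexppos : (0:ℝ) < rexp (x^2/4) := Real.exp_pos _
    have he2 : (1 + x^2/4) * rexp (-(x^2/4)) ≤ 1 := by
      rw [Real.exp_neg]
      calc (1 + x^2/4) * (rexp (x^2/4))⁻¹ ≤ rexp (x^2/4) * (rexp (x^2/4))⁻¹ := by
            apply mul_le_mul_of_nonneg_right he1 (by positivity)
      _ = 1 := mul_inv_cancel₀ hexppos.ne'
    have hsplit : rexp (-x^2/2) = rexp (-(x^2/4)) * rexp (-(x^2/4)) := by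
      rw [← Real.exp_add]; ring_nf
    have hposexp : (0:ℝ) < rexp (-(x^2/4)) := Real.exp_pos _
    have hkey : (x^2 + C) * pdfr x ≤ c'*(C+4) * rexp (-(1/4) * x^2) := by
      unfold pdfr
      rw [← hc', hsplit, show -(1/4:ℝ) * x^2 = -(x^2/4) by ring]
      have h3 : (x^2 + C) * rexp (-(x^2/4)) ≤ C + 4 := by
        calc (x^2 + C) * rexp (-(x^2/4)) ≤ ((C+4)*(1 + x^2/4)) * rexp (-(x^2/4)) := by
              apply mul_le_mul_of_nonneg_right (by nlinarith) hposexp.le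
        _ = (C+4) * ((1 + x^2/4) * rexp (-(x^2/4))) := by ring
        _ ≤ (C+4) * 1 := by apply mul_le_mul_of_nonneg_left he2 (by linarith)
        _ = C + 4 := mul_one _
      calc (x^2 + C) * (c' * (rexp (-(x^2/4)) * rexp (-(x^2/4))))
          = (c' * rexp (-(x^2/4))) * ((x^2 + C) * rexp (-(x^2/4))) := by ring
      _ ≤ (c' * rexp (-(x^2/4))) * (C+4) := by
            apply mul_le_mul_of_nonneg_left h3 (by positivity)
      _ = c'*(C+4) * rexp (-(x^2/4)) := by ring
    rw [Real.norm_eq_abs, abs_of_nonneg (mul_nonneg (by positivity) (pdfr_pos x).le)]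
    exact hkey

lemma integrable_log_rnDeriv :
    Integrable (fun x => Real.log
      (((gaussianReal 0 1).rnDeriv (PX.conv (gaussianReal 0 1)) x).toReal)) (gaussianReal 0 1) := by
  obtain ⟨R, hR, hPXR⟩ := exists_R PX
  have hae : (fun x => ((gaussianReal 0 1).rnDeriv (PX.conv (gaussianReal 0 1)) x))
      =ᵐ[gaussianReal 0 1] fun x => gaussianPDF 0 1 x / qdens PX x :=
    (gaussianReal_absolutelyContinuous 0 one_ne_zero).ae_eq (rnDeriv_eq_ratio PX)
  apply Integrable.mono' (integrable_sq_add (R^2 + Real.log 2) (by positivity))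
  · exact ((Measure.measurable_rnDeriv _ _).ennreal_toReal.log).aestronglyMeasurable
  · filter_upwards [hae] with x hx
    rw [Real.norm_eq_abs, hx]
    have := log_ratio_bound PX hR hPXR x
    linarith [this, abs_le.mp this]

end Lemmas

theorem concentration_of_small_kl (PX : Measure ℝ) [IsProbabilityMeasure PX]
    (ε : ℝ) (hε : 0 < ε) (hε1 : ε ≤ 1)
    (hkl : klDiv (gaussianReal 0 1) (PX.conv (gaussianReal 0 1)) ≤ 2 * ε) :
    (PX {x | ε ^ ((1 : ℝ) / 8) < |x|}).toReal ≤ 108 * ε ^ ((1 : ℝ) / 8) := by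
  have hπ := Real.pi_pos
  set N := gaussianReal 0 1 with hN
  set Q := PX.conv (gaussianReal 0 1) with hQdef
  have hNQ : N ≪ Q := N_ac_Q PX
  have hQprob : IsProbabilityMeasure Q := by
    constructor
    rw [hQdef, Measure.conv, Measure.map_apply measurable_add MeasurableSet.univ]
    simp
  set d := ε ^ ((1:ℝ)/8) with hd
  have hd0 : 0 < d := Real.rpow_pos_of_pos hε _
  have hd1 : d ≤ 1 := Real.rpow_le_one hε.le hε1 (by norm_num)
  set δ := d/3 with hδdef
  have hδ0 : 0 < δ := by positivity
  have hδ3 : δ ≤ 1/3 := by rw [hδdef]; linarith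
  set A := Set.Icc (-δ) δ with hA
  have hAm : MeasurableSet A := measurableSet_Icc
  set fr := fun x => ((N.rnDeriv Q) x).toReal with hfr
  have hfr_int : Integrable fr Q := Measure.integrable_toReal_rnDeriv
  have hmean : ∫ x, fr x ∂Q = 1 := by
    rw [hfr, Measure.integral_toReal_rnDeriv hNQ]
    simp [measure_univ]
  have hlog_int : Integrable (fun x => Real.log (fr x)) N := integrable_log_rnDeriv PX
  have hKL_int : Integrable (fun x => fr x * Real.log (fr x)) Q := by
    have := (MeasureTheory.integrable_rnDeriv_smul_iff hNQ).mpr hlog_int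
    simpa [smul_eq_mul] using this
  have hKL_eq : ∫ x, fr x * Real.log (fr x) ∂Q = klDiv N Q := by
    have := MeasureTheory.integral_rnDeriv_smul hNQ (f := fun x => Real.log (fr x))
    simp only [smul_eq_mul] at this; exact this
  set KL := ∫ x, fr x * Real.log (fr x) ∂Q with hKLdef
  have hKL_le : KL ≤ 2*ε := by rw [hKL_eq]; exact hkl
  set lam := 2*Real.sqrt ε with hlam
  have hsqε : 0 < Real.sqrt ε := Real.sqrt_pos.mpr hε
  have hlam0 : 0 < lam := by rw [hlam]; positivity
  -- Step A: pinsker-like bound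
  have hposPartInt : Integrable (fun x => max (1 - fr x) 0) Q :=
    ((integrable_const (1:ℝ)).sub hfr_int).pos_part
  have hfrm1 : Integrable (fun x => fr x - 1) Q := hfr_int.sub (integrable_const 1)
  have hsum : Integrable (fun x => fr x * Real.log (fr x) - fr x + 1) Q :=
    (hKL_int.sub hfr_int).add (integrable_const 1)
  have hsumdiv : Integrable (fun x => (fr x * Real.log (fr x) - fr x + 1)/lam) Q :=
    hsum.div_const _
  have hintA : ∫ x, max (1 - fr x) 0 ∂Q ≤ KL/lam + lam/2 := by
    have hRHSint : Integrable (fun x => (fr x * Real.log (fr x) - fr x + 1)/lam + lam/2) Q :=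
      hsumdiv.add (integrable_const _)
    calc ∫ x, max (1 - fr x) 0 ∂Q
        ≤ ∫ x, ((fr x * Real.log (fr x) - fr x + 1)/lam + lam/2) ∂Q :=
          integral_mono hposPartInt hRHSint
            (fun x => Lpt ENNReal.toReal_nonneg hlam0)
    _ = KL/lam + lam/2 := by
        rw [integral_add hsumdiv (integrable_const _), integral_const, integral_div]
        have hs2 : ∫ x, (fr x * Real.log (fr x) - fr x + 1) ∂Q = KL := by
          have e1 : ∫ x, (fr x * Real.log (fr x) - fr x + 1) ∂Q
              = (∫ x, (fr x * Real.log (fr x) - fr x) ∂Q) + ∫ _x, (1:ℝ) ∂Q :=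
            integral_add (hKL_int.sub hfr_int) (integrable_const 1)
          have e2 : ∫ x, (fr x * Real.log (fr x) - fr x) ∂Q
              = KL - ∫ x, fr x ∂Q := integral_sub hKL_int hfr_int
          rw [e1, e2, hmean, integral_const]
          simp [measure_univ]
        rw [hs2]
        simp [measure_univ]
  -- Step B
  have hposneg : ∫ x, max (fr x - 1) 0 ∂Q = ∫ x, max (1 - fr x) 0 ∂Q := by
    have hid : ∀ x, max (fr x - 1) 0 = max (1 - fr x) 0 + (fr x - 1) := by
      intro x
      rcases le_total (fr x) 1 with h|h
      · rw [max_eq_right (by linarith), max_eq_left (by linarith)]; ring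
      · rw [max_eq_left (by linarith), max_eq_right (by linarith)]; ring
    have e1 : ∫ x, (max (1 - fr x) 0 + (fr x - 1)) ∂Q
        = (∫ x, max (1 - fr x) 0 ∂Q) + ∫ x, (fr x - 1) ∂Q :=
      integral_add hposPartInt hfrm1
    have e2 : ∫ x, (fr x - 1) ∂Q = (∫ x, fr x ∂Q) - ∫ _x, (1:ℝ) ∂Q :=
      integral_sub hfr_int (integrable_const 1)
    rw [integral_congr_ae (ae_of_all _ hid), e1, e2, hmean, integral_const]
    simp [measure_univ]
  have hgapB : (N A).toReal - (Q A).toReal ≤ ∫ x, max (1 - fr x) 0 ∂Q := by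
    have h1 : ∫ x in A, fr x ∂Q = (N A).toReal := Measure.setIntegral_toReal_rnDeriv hNQ A
    have h2 : ∫ x in A, (1:ℝ) ∂Q = (Q A).toReal := by
      rw [setIntegral_const, smul_eq_mul, mul_one]; rfl
    have h3 : ∫ x in A, (fr x - 1) ∂Q ≤ ∫ x in A, max (fr x - 1) 0 ∂Q :=
      integral_mono hfrm1.restrict hfrm1.pos_part.restrict (fun x => le_max_left _ _)
    have h4 : ∫ x in A, max (fr x - 1) 0 ∂Q ≤ ∫ x, max (fr x - 1) 0 ∂Q :=
      setIntegral_le_integral hfrm1.pos_part (ae_of_all _ (fun x => le_max_right _ _))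
    have h5 : ∫ x in A, (fr x - 1) ∂Q = (∫ x in A, fr x ∂Q) - ∫ _x in A, (1:ℝ) ∂Q :=
      integral_sub hfr_int.restrict (integrable_const 1)
    rw [h5, h1, h2] at h3
    linarith [hposneg]
  -- Step C: geometry
  set G := fun t => ((gaussianReal 0 1) {y | t + y ∈ A}).toReal with hG
  have hGmeas0 : Measurable (fun t => (gaussianReal 0 1) {y | t + y ∈ A}) :=
    measurable_measure_prodMk_left (measurable_add hAm)
  have hQA : (Q A).toReal = ∫ t, G t ∂PX := by
    rw [hQdef, conv_apply' PX hAm,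
      ← integral_toReal hGmeas0.aemeasurable (ae_of_all _ fun t => measure_lt_top _ _)]
  have hGt : ∀ t : ℝ, G t = ∫ x in (-δ - t)..(δ - t), pdfr x := by
    intro t
    have hIcc : {y | t + y ∈ A} = Set.Icc (-δ - t) (δ - t) := by
      ext y
      simp only [hA, Set.mem_Icc, Set.mem_setOf_eq]
      constructor <;> (intro h; exact ⟨by linarith [h.1], by linarith [h.2]⟩)
    show ((gaussianReal 0 1) {y | t + y ∈ A}).toReal = _
    rw [hIcc, NIcc (by linarith)]
  have hNA : (N A).toReal = ∫ x in (-δ)..δ, pdfr x := by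
    rw [hN, hA, NIcc (by linarith)]
  have hG_le : ∀ t : ℝ, G t ≤ (N A).toReal := by
    intro t
    rw [hGt t, hNA]
    have h := anderson (c := -t) (δ := δ) hδ0.le
    have e1 : -t - δ = -δ - t := by ring
    have e2 : -t + δ = δ - t := by ring
    rwa [e1, e2] at h
  have hG_far : ∀ t : ℝ, d < |t| → G t ≤ 2*δ*pdfr (2*δ) := by
    intro t ht
    rw [hGt t]
    have h3δ : 3*δ = d := by rw [hδdef]; ring
    have h := far_bound (c := -t) (δ := δ) hδ0.le (by rw [abs_neg, h3δ]; exact ht.le)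
    have e1 : -t - δ = -δ - t := by ring
    have e2 : -t + δ = δ - t := by ring
    rwa [e1, e2] at h
  set S := {x : ℝ | d < |x|} with hS
  have hSm : MeasurableSet S := (isOpen_lt continuous_const continuous_abs).measurableSet
  have hGint : Integrable G PX := by
    apply Integrable.mono' (integrable_const (1:ℝ)) hGmeas0.ennreal_toReal.aestronglyMeasurable
    apply ae_of_all
    intro t
    rw [Real.norm_eq_abs, abs_of_nonneg ENNReal.toReal_nonneg]
    exact ENNReal.toReal_le_of_le_ofReal zero_le_one (by simpa using prob_le_one)
  have hgap2 : ∫ t, ((N A).toReal - G t) ∂PX = (N A).toReal - (Q A).toReal := by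
    rw [integral_sub (integrable_const _) hGint, integral_const, hQA]
    simp [measure_univ]
  have hstep1 : ∫ t in S, ((N A).toReal - G t) ∂PX ≤ ∫ t, ((N A).toReal - G t) ∂PX :=
    setIntegral_le_integral ((integrable_const _).sub hGint)
      (ae_of_all _ (fun t => by simp only [Pi.zero_apply, sub_nonneg]; exact hG_le t))
  have hstep2 : δ^3 * (PX S).toReal ≤ ∫ t in S, ((N A).toReal - G t) ∂PX := by
    have hc : ∀ t ∈ S, δ^3 ≤ (N A).toReal - G t := by
      intro t ht
      have h1 := hG_far t ht
      have h2 := center_bound hδ0 hδ3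
      rw [hNA]
      linarith
    calc δ^3 * (PX S).toReal = ∫ _t in S, δ^3 ∂PX := by
          rw [setIntegral_const, smul_eq_mul, measureReal_def]; ring
    _ ≤ ∫ t in S, ((N A).toReal - G t) ∂PX :=
          setIntegral_mono_on (integrable_const _).integrableOn
            ((integrable_const _).sub hGint).integrableOn hSm hc
  -- combine
  have hd8 : d^(8:ℕ) = ε := by
    rw [hd, ← Real.rpow_natCast (ε ^ ((1:ℝ)/8)) 8, ← Real.rpow_mul hε.le]
    norm_num
  have hsqrt : Real.sqrt ε = d^4 := by
    rw [show ε = (d^4)^2 by rw [← hd8]; ring, Real.sqrt_sq (by positivity)]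
  have hlamval : KL/lam + lam/2 ≤ 2*Real.sqrt ε := by
    have h1 : KL/lam ≤ (2*ε)/lam := by gcongr
    have h2 : (2*ε)/lam = Real.sqrt ε := by
      rw [hlam, mul_div_mul_left _ _ (two_ne_zero : (2:ℝ) ≠ 0)]
      exact Real.div_sqrt
    have h3 : lam/2 = Real.sqrt ε := by rw [hlam]; ring
    linarith
  have hchain : δ^3 * (PX S).toReal ≤ 2*Real.sqrt ε := by
    calc δ^3 * (PX S).toReal ≤ ∫ t in S, ((N A).toReal - G t) ∂PX := hstep2
    _ ≤ ∫ t, ((N A).toReal - G t) ∂PX := hstep1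
    _ = (N A).toReal - (Q A).toReal := hgap2
    _ ≤ ∫ x, max (1 - fr x) 0 ∂Q := hgapB
    _ ≤ KL/lam + lam/2 := hintA
    _ ≤ 2*Real.sqrt ε := hlamval
  have hfin : (PX S).toReal ≤ 162*δ := by
    rw [← mul_le_mul_iff_of_pos_right (pow_pos hδ0 3)]
    calc (PX S).toReal * δ^3 = δ^3 * (PX S).toReal := mul_comm _ _
    _ ≤ 2*Real.sqrt ε := hchain
    _ = 2*d^4 := by rw [hsqrt]
    _ = 162*δ*δ^3 := by rw [hδdef]; ring
  calc (PX S).toReal ≤ 162*δ := hfin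
  _ = 54*d := by rw [hδdef]; ring
  _ ≤ 108*d := by linarith
end
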